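/- arXiv:1811.09220 — 3 statements merged into one kernel-verified Lean document; each statement's English description precedes it below -/
import Mathlib

section
/- Let R be a normed ring. Any morphism f : M → N between finitely generated R-modules is bounded with respect to filling norms: there exists C > 0 such that ‖f(m)‖_N ≤ C‖m‖_M for all m ∈ M. -/
variable {R : Type*} [Ring R]

/-- The ℓ¹-norm on the finitely generated based free `R`-module `Λ → R`. -/
noncomputable def l1Norm {Λ : Type*} [Fintype Λ] (ν : RingNorm R) (f : Λ → R) : ℝ :=
  ∑ x, ν (f x)

/-- The filling norm on `M` induced by a surjection `ρ : (Λ → R) → M`. -/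
noncomputable def fillingNorm {Λ : Type*} [Fintype Λ] {M : Type*} [AddCommGroup M] [Module R M]
    (ν : RingNorm R) (ρ : (Λ → R) →ₗ[R] M) (m : M) : ℝ :=
  sInf {c : ℝ | ∃ x : Λ → R, ρ x = m ∧ l1Norm ν x = c}

lemma l1Norm_nonneg {Λ : Type*} [Fintype Λ] (ν : RingNorm R) (z : Λ → R) :
    0 ≤ l1Norm ν z :=
  Finset.sum_nonneg fun _ _ => apply_nonneg ν _

lemma fillingNorm_bddBelow {Λ : Type*} [Fintype Λ] {M : Type*} [AddCommGroup M] [Module R M]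
    (ν : RingNorm R) (ρ : (Λ → R) →ₗ[R] M) (m : M) :
    BddBelow {c : ℝ | ∃ x : Λ → R, ρ x = m ∧ l1Norm ν x = c} := by
  refine ⟨0, fun c hc => ?_⟩
  obtain ⟨x, -, rfl⟩ := hc
  exact l1Norm_nonneg ν x

/-- Any morphism between finitely generated `R`-modules is bounded with respect to filling
norms: there is `C > 0` with `‖f m‖_N ≤ C * ‖m‖_M` for all `m`. -/
theorem morphism_bounded_fillingNorms {ΛM ΛN : Type*} [Fintype ΛM] [Fintype ΛN]
    {M N : Type*} [AddCommGroup M] [Module R M] [AddCommGroup N] [Module R N]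
    (ν : RingNorm R)
    (ρM : (ΛM → R) →ₗ[R] M) (hρM : Function.Surjective ρM)
    (ρN : (ΛN → R) →ₗ[R] N) (hρN : Function.Surjective ρN)
    (f : M →ₗ[R] N) :
    ∃ C : ℝ, 0 < C ∧ ∀ m : M, fillingNorm ν ρN (f m) ≤ C * fillingNorm ν ρM m := by
  classical
  -- choose lifts of the images of basis vectors
  set g : ΛM → ΛN → R := fun i => (hρN (f (ρM (Pi.single i 1)))).choose with hg
  have hgspec : ∀ i, ρN (g i) = f (ρM (Pi.single i 1)) :=
    fun i => (hρN (f (ρM (Pi.single i 1)))).choose_spec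
  set C : ℝ := 1 + ∑ i, l1Norm ν (g i) with hC
  have hCpos : 0 < C := by
    have : 0 ≤ ∑ i, l1Norm ν (g i) :=
      Finset.sum_nonneg fun i _ => l1Norm_nonneg ν (g i)
    linarith
  have hgC : ∀ i, l1Norm ν (g i) ≤ C := by
    intro i
    have h1 : l1Norm ν (g i) ≤ ∑ j, l1Norm ν (g j) :=
      Finset.single_le_sum (f := fun j => l1Norm ν (g j))
        (fun j _ => l1Norm_nonneg ν (g j)) (Finset.mem_univ i)
    linarith
  -- the key estimate for any representative x
  have key : ∀ x : ΛM → R, fillingNorm ν ρN (f (ρM x)) ≤ C * l1Norm ν x := by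
    intro x
    set y : ΛN → R := ∑ i, x i • g i with hy
    have hρy : ρN y = f (ρM x) := by
      have hx : (∑ i, x i • (Pi.single i 1 : ΛM → R)) = x := by
        have : ∀ i, x i • (Pi.single i 1 : ΛM → R) = Pi.single i (x i) := by
          intro i
          rw [← Pi.single_smul, smul_eq_mul, mul_one]
        simp_rw [this]
        exact Finset.univ_sum_single x
      calc ρN y = ∑ i, x i • ρN (g i) := by simp [hy, map_sum]
        _ = ∑ i, x i • f (ρM (Pi.single i 1)) := by simp_rw [hgspec]
        _ = f (ρM (∑ i, x i • (Pi.single i 1 : ΛM → R))) := by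
            simp [map_sum]
        _ = f (ρM x) := by rw [hx]
    have hyle : l1Norm ν y ≤ C * l1Norm ν x := by
      have h1 : l1Norm ν y ≤ ∑ i, ν (x i) * l1Norm ν (g i) := by
        unfold l1Norm
        calc ∑ j, ν (y j) = ∑ j, ν (∑ i, x i * g i j) := by
              simp [hy, Finset.sum_apply]
          _ ≤ ∑ j, ∑ i, ν (x i * g i j) :=
              Finset.sum_le_sum fun j _ =>
                Finset.le_sum_of_subadditive ν (map_zero ν).le (map_add_le_add ν) _ _
          _ ≤ ∑ j, ∑ i, ν (x i) * ν (g i j) :=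
              Finset.sum_le_sum fun j _ => Finset.sum_le_sum fun i _ =>
                map_mul_le_mul ν _ _
          _ = ∑ i, ν (x i) * ∑ j, ν (g i j) := by
              rw [Finset.sum_comm]
              simp [Finset.mul_sum]
      have h2 : ∑ i, ν (x i) * l1Norm ν (g i) ≤ ∑ i, ν (x i) * C :=
        Finset.sum_le_sum fun i _ =>
          mul_le_mul_of_nonneg_left (hgC i) (apply_nonneg ν _)
      have h3 : ∑ i, ν (x i) * C = C * l1Norm ν x := by
        rw [← Finset.sum_mul, mul_comm]; rfl
      linarith
    have hmem : l1Norm ν y ∈ {c : ℝ | ∃ z : ΛN → R, ρN z = f (ρM x) ∧ l1Norm ν z = c} :=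
      ⟨y, hρy, rfl⟩
    calc fillingNorm ν ρN (f (ρM x)) ≤ l1Norm ν y :=
          csInf_le (fillingNorm_bddBelow ν ρN _) hmem
      _ ≤ C * l1Norm ν x := hyle
  refine ⟨C, hCpos, fun m => ?_⟩
  have hne : {c : ℝ | ∃ x : ΛM → R, ρM x = m ∧ l1Norm ν x = c}.Nonempty := by
    obtain ⟨x, hx⟩ := hρM m
    exact ⟨l1Norm ν x, x, hx, rfl⟩
  have hdiv : fillingNorm ν ρN (f m) / C ≤ fillingNorm ν ρM m := by
    refine le_csInf hne ?_
    rintro c ⟨x, rfl, rfl⟩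
    rw [div_le_iff₀ hCpos, mul_comm]
    exact key x
  rw [div_le_iff₀ hCpos, mul_comm] at hdiv
  exact hdiv
end

section
/- Let G be a group, H ≤ G a subgroup, and R a normed ring. If M is a free RG-module with ℓ¹-norm induced by a free RG-basis Λ, then M is free as an RH-module and admits an RH-basis Λ_H = {g·x : x ∈ Λ, g ∈ S} (S a right transversal of H in G) whose induced ℓ¹-norm on M equals the original ℓ¹-norm. -/
variable {R : Type*} [Ring R]

/-- The ℓ¹-norm on a group ring `MonoidAlgebra R Γ` induced by the free `R`-basis `Γ`. -/
noncomputable def l1GroupRing {Γ : Type*} (ν : RingNorm R) (a : MonoidAlgebra R Γ) : ℝ :=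
  a.coeff.sum fun _ r => ν r

/-- The ℓ¹-norm on the free `MonoidAlgebra R Γ`-module with basis `Λ`. -/
noncomputable def l1FreeGroupRing {Γ Λ : Type*} (ν : RingNorm R)
    (m : Λ →₀ MonoidAlgebra R Γ) : ℝ :=
  m.sum fun _ a => l1GroupRing ν a

noncomputable def indexEquiv {G : Type*} [Group G] {H : Subgroup G} {S : Set G}
    (hS : Subgroup.IsComplement (H : Set G) S) (Λ : Type*) :
    Λ × G ≃ (Λ × S) × H :=
  ((Equiv.refl Λ).prodCongr hS.equiv).trans
    (((Equiv.refl Λ).prodCongr (Equiv.prodComm _ _)).trans (Equiv.prodAssoc Λ S ↥H).symm)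

noncomputable def reprEquiv (R : Type*) [Ring R] {G : Type*} [Group G] {H : Subgroup G}
    {S : Set G} (hS : Subgroup.IsComplement (H : Set G) S) (Λ : Type*) :
    (Λ →₀ MonoidAlgebra R G) ≃ₗ[R] (Λ × S →₀ MonoidAlgebra R ↥H) :=
  ((Finsupp.mapRange.linearEquiv (MonoidAlgebra.coeffLinearEquiv R)).trans
  (((Finsupp.finsuppProdLEquiv R).symm : (Λ →₀ (G →₀ R)) ≃ₗ[R] (Λ × G →₀ R)).trans
    ((Finsupp.domLCongr (indexEquiv hS Λ)).trans (Finsupp.finsuppProdLEquiv R)))).trans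
    (Finsupp.mapRange.linearEquiv (MonoidAlgebra.coeffLinearEquiv R).symm)

lemma reprEquiv_single (R : Type*) [Ring R] {G : Type*} [Group G] {H : Subgroup G}
    {S : Set G} (hS : Subgroup.IsComplement (H : Set G) S) {Λ : Type*}
    (x : Λ) (g : G) (r : R) :
    reprEquiv R hS Λ (Finsupp.single x (MonoidAlgebra.single g r))
      = Finsupp.single (x, (hS.equiv g).2) (MonoidAlgebra.single ((hS.equiv g).1) r) := by
  classical
  have h1 : (Finsupp.finsuppProdLEquiv R).symm (Finsupp.single x (Finsupp.single g r))
      = Finsupp.single (x, g) r := by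
    rw [LinearEquiv.symm_apply_eq]
    ext a b
    rw [Finsupp.finsuppProdLEquiv, Finsupp.curryLinearEquiv_apply, Finsupp.curry_apply]
    simp only [Finsupp.single_apply, Prod.mk.injEq, ite_and]
    split_ifs <;> simp_all [Finsupp.single_apply]
  show Finsupp.mapRange.linearEquiv (MonoidAlgebra.coeffLinearEquiv R).symm
      ((Finsupp.finsuppProdLEquiv R) ((Finsupp.domLCongr (indexEquiv hS Λ))
      ((Finsupp.finsuppProdLEquiv R).symm (Finsupp.mapRange.linearEquiv
        (MonoidAlgebra.coeffLinearEquiv R) (Finsupp.single x (MonoidAlgebra.single g r)))))) = _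
  simp only [Finsupp.mapRange.linearEquiv_apply, Finsupp.mapRange_single,
    MonoidAlgebra.coeffLinearEquiv_apply, MonoidAlgebra.coeff_single]
  erw [h1]
  rw [Finsupp.domLCongr_single]
  ext a b
  rw [Finsupp.mapRange_apply, MonoidAlgebra.coeffLinearEquiv_symm_apply,
    MonoidAlgebra.coeff_ofCoeff, Finsupp.finsuppProdLEquiv, Finsupp.curryLinearEquiv_apply,
    Finsupp.curry_apply]
  have h2 : indexEquiv hS Λ (x, g) = ((x, (hS.equiv g).2), (hS.equiv g).1) := rfl
  rw [h2]
  simp only [Finsupp.single_apply, Prod.mk.injEq, ite_and, MonoidAlgebra.coeff_single]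
  split_ifs <;> simp_all [Finsupp.single_apply]

lemma reprEquiv_smul (R : Type*) [Ring R] {G : Type*} [Group G] {H : Subgroup G}
    {S : Set G} (hS : Subgroup.IsComplement (H : Set G) S) (Λ : Type*) :
    letI : Module (MonoidAlgebra R ↥H) (Λ →₀ MonoidAlgebra R G) :=
      Module.compHom _ (MonoidAlgebra.mapDomainRingHom R H.subtype)
    ∀ (c : MonoidAlgebra R ↥H) (m : Λ →₀ MonoidAlgebra R G),
      reprEquiv R hS Λ (c • m) = c • reprEquiv R hS Λ m := by
  letI : Module (MonoidAlgebra R ↥H) (Λ →₀ MonoidAlgebra R G) :=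
    Module.compHom _ (MonoidAlgebra.mapDomainRingHom R H.subtype)
  intro c m
  induction m using Finsupp.induction_linear with
  | zero => simp
  | add f g hf hg => rw [smul_add, map_add, hf, hg, map_add, smul_add]
  | single x a =>
    induction a using MonoidAlgebra.induction_linear with
    | zero => simp
    | add f g hf hg =>
      rw [Finsupp.single_add, smul_add, map_add, hf, hg, ← smul_add, ← map_add,
        ← Finsupp.single_add]
    | single g r =>
      induction c using MonoidAlgebra.induction_linear with
      | zero => simp
      | add f g hf hg => rw [add_smul, map_add, hf, hg, add_smul]
      | single h r' =>
        have hL : (MonoidAlgebra.single h r' : MonoidAlgebra R ↥H) •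
            (Finsupp.single x (MonoidAlgebra.single g r) : Λ →₀ MonoidAlgebra R G)
            = Finsupp.single x (MonoidAlgebra.single ((h : G) * g) (r' * r)) := by
          show (MonoidAlgebra.mapDomainRingHom R H.subtype (MonoidAlgebra.single h r')) •
              (Finsupp.single x (MonoidAlgebra.single g r) : Λ →₀ MonoidAlgebra R G) = _
          have hmap : MonoidAlgebra.mapDomainRingHom R H.subtype (MonoidAlgebra.single h r')
              = MonoidAlgebra.single (h : G) r' := by
            simp [MonoidAlgebra.mapDomainRingHom_apply]
          rw [hmap, Finsupp.smul_single]
          congr 1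
          show (MonoidAlgebra.single (H.subtype h) r') * (MonoidAlgebra.single g r) = _
          rw [MonoidAlgebra.single_mul_single]
          rfl
        have hR : (MonoidAlgebra.single h r' : MonoidAlgebra R ↥H) •
            (Finsupp.single (x, (hS.equiv g).2) (MonoidAlgebra.single ((hS.equiv g).1) r)
              : Λ × S →₀ MonoidAlgebra R ↥H)
            = Finsupp.single (x, (hS.equiv g).2)
                (MonoidAlgebra.single (h * (hS.equiv g).1) (r' * r)) := by
          rw [Finsupp.smul_single]
          congr 1
          show (MonoidAlgebra.single h r') * (MonoidAlgebra.single ((hS.equiv g).1) r) = _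
          rw [MonoidAlgebra.single_mul_single]
        rw [hL, reprEquiv_single, reprEquiv_single, hR, Subgroup.IsComplement.equiv_mul_left]

lemma curry_sum_l1' {α β M : Type*} [AddCommMonoid M] (ν : M → ℝ) (h0 : ν 0 = 0)
    (f : α × β →₀ M) :
    ((Finsupp.curry f).sum fun _ g => g.sum fun _ c => ν c) = f.sum fun _ c => ν c := by
  classical
  set A := f.support.image Prod.fst with hA
  set B := f.support.image Prod.snd with hB
  have key : ∀ a : α, ((Finsupp.curry f) a).sum (fun _ c => ν c)
      = ∑ b ∈ B, ν (f (a, b)) := by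
    intro a
    rw [Finsupp.sum]
    have h1 : ∑ b ∈ ((Finsupp.curry f) a).support, ν ((Finsupp.curry f) a b)
        = ∑ b ∈ ((Finsupp.curry f) a).support, ν (f (a, b)) :=
      Finset.sum_congr rfl fun b _ => by rw [Finsupp.curry_apply]
    rw [h1]
    refine Finset.sum_subset ?_ ?_
    · intro b hb
      rw [Finsupp.mem_support_iff, Finsupp.curry_apply] at hb
      exact Finset.mem_image.mpr ⟨(a, b), Finsupp.mem_support_iff.mpr hb, rfl⟩
    · intro b _ hb
      rw [Finsupp.notMem_support_iff] at hb
      rw [← Finsupp.curry_apply, hb, h0]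
  rw [Finsupp.sum]
  calc ∑ a ∈ (Finsupp.curry f).support, ((Finsupp.curry f) a).sum (fun _ c => ν c)
      = ∑ a ∈ (Finsupp.curry f).support, ∑ b ∈ B, ν (f (a, b)) :=
        Finset.sum_congr rfl fun a _ => key a
    _ = ∑ a ∈ A, ∑ b ∈ B, ν (f (a, b)) := by
        refine Finset.sum_subset ?_ ?_
        · intro a ha
          rw [Finsupp.mem_support_iff] at ha
          obtain ⟨b, hb⟩ := Finsupp.ne_iff.mp ha
          rw [Finsupp.curry_apply] at hb
          exact Finset.mem_image.mpr ⟨(a, b), Finsupp.mem_support_iff.mpr (by simpa using hb), rfl⟩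
        · intro a _ ha
          rw [Finsupp.notMem_support_iff] at ha
          refine Finset.sum_eq_zero fun b _ => ?_
          rw [← Finsupp.curry_apply, ha]
          simpa using h0
    _ = ∑ p ∈ A ×ˢ B, ν (f p) := by rw [Finset.sum_product]
    _ = ∑ p ∈ f.support, ν (f p) := by
        refine (Finset.sum_subset ?_ ?_).symm
        · intro p hp
          exact Finset.mem_product.mpr
            ⟨Finset.mem_image.mpr ⟨p, hp, rfl⟩, Finset.mem_image.mpr ⟨p, hp, rfl⟩⟩
        · intro p _ hp
          rw [Finsupp.notMem_support_iff] at hp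
          rw [hp, h0]
    _ = f.sum fun _ c => ν c := rfl


/-- A free `RG`-module `M` with basis `Λ` is, upon restriction to a subgroup `H ≤ G`, a free
`RH`-module with basis `Λ_H = {g • x : x ∈ Λ, g ∈ S}` for a right transversal `S` of `H` in
`G`, and the ℓ¹-norm induced by the `RH`-basis `Λ_H` equals the original ℓ¹-norm. -/
theorem free_module_restriction_basis_l1 {G : Type*} [Group G] (H : Subgroup G)
    (ν : RingNorm R) (Λ : Type*) :
    letI : Module (MonoidAlgebra R ↥H) (Λ →₀ MonoidAlgebra R G) :=
      Module.compHom _ (MonoidAlgebra.mapDomainRingHom R H.subtype)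
    ∃ S : Set G, Subgroup.IsComplement (H : Set G) S ∧
      ∃ b : Module.Basis (Λ × S) (MonoidAlgebra R ↥H) (Λ →₀ MonoidAlgebra R G),
        (∀ (x : Λ) (s : S),
          b (x, s) = Finsupp.single x (MonoidAlgebra.single (s : G) (1 : R))) ∧
        (∀ m : Λ →₀ MonoidAlgebra R G,
          ((b.repr m).sum fun _ a => l1GroupRing ν a) = l1FreeGroupRing ν m) := by
  letI : Module (MonoidAlgebra R ↥H) (Λ →₀ MonoidAlgebra R G) :=
    Module.compHom _ (MonoidAlgebra.mapDomainRingHom R H.subtype)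
  obtain ⟨S, hS, -⟩ := Subgroup.exists_isComplement_right H 1
  have hS' : Subgroup.IsComplement (H : Set G) S := hS
  refine ⟨S, hS', ?_⟩
  set e := ((reprEquiv R hS' Λ).toAddEquiv).toLinearEquiv (reprEquiv_smul R hS' Λ) with he
  set b : Module.Basis (Λ × S) (MonoidAlgebra R ↥H) (Λ →₀ MonoidAlgebra R G) := Module.Basis.ofRepr e with hb
  have hrepr : ∀ m, b.repr m = reprEquiv R hS' Λ m := fun m => rfl
  refine ⟨b, ?_, ?_⟩
  · intro x s
    apply b.repr.injective
    rw [Module.Basis.repr_self, hrepr, reprEquiv_single]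
    have h1 : hS'.equiv (s : G) =
        (⟨1, H.one_mem⟩, ⟨(s : G), s.2⟩) := by
      ext
      · exact congrArg Subtype.val
          (Subgroup.IsComplement.equiv_fst_eq_one_of_mem_of_one_mem hS' H.one_mem s.2)
      · exact congrArg Subtype.val
          (Subgroup.IsComplement.equiv_snd_eq_self_of_mem_of_one_mem hS' H.one_mem s.2)
    rw [h1]
    rfl
  · intro m
    rw [hrepr]
    set ι := indexEquiv hS' Λ
    set f1 : Λ × G →₀ R := (Finsupp.finsuppProdLEquiv R).symm
      (Finsupp.mapRange.linearEquiv (MonoidAlgebra.coeffLinearEquiv R) m) with hf1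
    have estep : (reprEquiv R hS' Λ m : Λ × S →₀ MonoidAlgebra R ↥H)
        = Finsupp.mapRange.linearEquiv (MonoidAlgebra.coeffLinearEquiv R).symm
          (Finsupp.curry (Finsupp.equivMapDomain ι f1)) := by
      show Finsupp.mapRange.linearEquiv (MonoidAlgebra.coeffLinearEquiv R).symm
        (Finsupp.finsuppProdLEquiv R ((Finsupp.domLCongr ι) f1)) = _
      rw [Finsupp.domLCongr_apply]
      rfl
    have hm : Finsupp.curry f1 = Finsupp.mapRange.linearEquiv (MonoidAlgebra.coeffLinearEquiv R) m := by
      show Finsupp.finsuppProdLEquiv R ((Finsupp.finsuppProdLEquiv R).symm _) = _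
      exact (Finsupp.finsuppProdLEquiv R).apply_symm_apply _
    calc ((reprEquiv R hS' Λ m).sum fun _ a => l1GroupRing ν a)
        = (Finsupp.equivMapDomain ι f1).sum (fun _ c => (ν c : ℝ)) := by
          rw [estep, Finsupp.mapRange.linearEquiv_apply,
            Finsupp.sum_mapRange_index (by simp [l1GroupRing])]
          exact curry_sum_l1' (fun c => ν c) (by simp) _
      _ = f1.sum (fun _ c => (ν c : ℝ)) := Finsupp.sum_equivMapDomain ι f1 _
      _ = (Finsupp.curry f1).sum fun _ g => g.sum fun _ c => (ν c : ℝ) :=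
          (curry_sum_l1' (fun c => ν c) (by simp) f1).symm
      _ = l1FreeGroupRing ν m := by
          rw [hm, Finsupp.mapRange.linearEquiv_apply, Finsupp.sum_mapRange_index (by simp)]
          rfl
end

section
/- Let R be a subring of ℚ, G a group with subgroup H, P a finitely generated RH-module, Q a finitely generated RG-module, and f : P → Q an RH-module morphism. If A and B are integral parts of P and Q respectively (over ℤH and ℤG), then there exists a positive integer m, invertible in R, such that f(m·A) ⊆ B. -/
/-- The canonical ring homomorphism `ℤΓ → RΓ` on group rings induced by `ℤ → R`,
for a subring `R` of `ℚ`. -/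
noncomputable def intCoeff (R : Subring ℚ) (Γ : Type*) [Monoid Γ] :
    MonoidAlgebra ℤ Γ →+* MonoidAlgebra R Γ :=
  MonoidAlgebra.liftNCRingHom
    (MonoidAlgebra.singleOneRingHom.comp (Int.castRingHom R))
    (MonoidAlgebra.of R Γ)
    (fun z g => by
      show _ * _ = _ * _
      simp only [RingHom.coe_comp, Function.comp_apply, eq_intCast]
      exact Int.cast_commute z _)

lemma intCoeff_single (R : Subring ℚ) {Γ : Type*} [Monoid Γ] (g : Γ) (z : ℤ) :
    intCoeff R Γ (MonoidAlgebra.single g z) = MonoidAlgebra.single g (z : R) := by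
  show MonoidAlgebra.liftNC _ _ (MonoidAlgebra.single g z) = _
  rw [MonoidAlgebra.liftNC_single]
  show MonoidAlgebra.single 1 (z:R) * MonoidAlgebra.single g 1 = _
  rw [MonoidAlgebra.single_mul_single, one_mul, mul_one]

lemma intCoeff_comm (R : Subring ℚ) {G : Type*} [Group G] (H : Subgroup G) :
    (intCoeff R G).comp (MonoidAlgebra.mapDomainRingHom ℤ H.subtype) =
      (MonoidAlgebra.mapDomainRingHom R H.subtype).comp (intCoeff R ↥H) := by
  apply MonoidAlgebra.ringHom_ext <;> intro a <;>
    simp [MonoidAlgebra.mapDomainRingHom, intCoeff_single, Finsupp.mapDomain_single,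
      MonoidAlgebra.of_apply]

lemma subring_clear_denom (R : Subring ℚ) (r : R) :
    ∃ n : ℕ, 0 < n ∧ IsUnit ((n : R)) ∧ ∃ z : ℤ, (z : R) = n • r := by
  obtain ⟨q, hq⟩ := r
  have h0 : (q.den : ℚ) ≠ 0 := by exact_mod_cast q.den_ne_zero
  have hdq : (q.den : ℚ) * q = q.num := by
    have := (div_eq_iff h0).mp (Rat.num_div_den q)
    rw [mul_comm, ← this]
  have hcop : IsCoprime (q.num) (q.den : ℤ) := by
    rw [Int.isCoprime_iff_gcd_eq_one]
    exact q.reduced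
  obtain ⟨u, v, huv⟩ := hcop
  refine ⟨q.den, q.pos, ?_, q.num, ?_⟩
  · refine IsUnit.of_mul_eq_one (u • ⟨q, hq⟩ + (v : R)) ?_
    ext
    push_cast [zsmul_eq_mul]
    calc (q.den : ℚ) * ((u:ℚ) * q + v) = u * ((q.den:ℚ) * q) + v * q.den := by ring
    _ = u * q.num + v * q.den := by rw [hdq]
    _ = 1 := by exact_mod_cast huv
  · ext
    push_cast
    rw [← hdq]; ring

lemma monoidAlgebra_clear_denom (R : Subring ℚ) {Γ : Type*} [Monoid Γ]
    (r : MonoidAlgebra R Γ) :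
    ∃ n : ℕ, 0 < n ∧ IsUnit ((n : R)) ∧
      ∃ z : MonoidAlgebra ℤ Γ, intCoeff R Γ z = n • r := by
  induction r using MonoidAlgebra.induction with
  | zero => exact ⟨1, one_pos, by simp, 0, by simp⟩
  | single_add g c r' _ _ ih =>
    obtain ⟨n2, hn2, hu2, z2, hz2⟩ := ih
    obtain ⟨n1, hn1, hu1, z0, hz0⟩ := subring_clear_denom R c
    refine ⟨n1 * n2, Nat.mul_pos hn1 hn2, by push_cast; exact hu1.mul hu2,
      n2 • MonoidAlgebra.single g z0 + n1 • z2, ?_⟩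
    rw [map_add, map_nsmul, map_nsmul, intCoeff_single, hz2, hz0]
    have hs : MonoidAlgebra.single g (n1 • c) = n1 • MonoidAlgebra.single g c :=
      (MonoidAlgebra.smul_single n1 g c).symm
    rw [hs, smul_add, mul_smul, mul_smul, smul_comm n2 n1]

/-- Let `R ≤ ℚ`, `H ≤ G` groups, `P` a finitely generated `RH`-module, `Q` a finitely
generated `RG`-module (viewed as an `RH`-module by restriction of scalars), and
`f : P → Q` an `RH`-morphism. If `A` and `B` are integral parts of `P` and `Q`
(over `ℤH` and `ℤG` respectively), then there is a positive integer `m`, invertible in `R`,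
with `f(m • A) ⊆ B`. -/
theorem integral_part_image_subgroup (R : Subring ℚ) {G : Type*} [Group G] (H : Subgroup G)
    {P Q : Type*} [AddCommGroup P] [Module (MonoidAlgebra R ↥H) P]
    [AddCommGroup Q] [Module (MonoidAlgebra R G) Q]
    [Module.Finite (MonoidAlgebra R ↥H) P] [Module.Finite (MonoidAlgebra R G) Q] :
    letI : Module (MonoidAlgebra R ↥H) Q :=
      Module.compHom _ (MonoidAlgebra.mapDomainRingHom R H.subtype)
    letI : Module (MonoidAlgebra ℤ ↥H) P := Module.compHom _ (intCoeff R ↥H)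
    letI : Module (MonoidAlgebra ℤ G) Q := Module.compHom _ (intCoeff R G)
    ∀ (f : P →ₗ[MonoidAlgebra R ↥H] Q)
      (A : Submodule (MonoidAlgebra ℤ ↥H) P) (B : Submodule (MonoidAlgebra ℤ G) Q),
      A.FG → Submodule.span (MonoidAlgebra R ↥H) (A : Set P) = ⊤ →
      B.FG → Submodule.span (MonoidAlgebra R G) (B : Set Q) = ⊤ →
      ∃ m : ℕ, 0 < m ∧ IsUnit ((m : R)) ∧ ∀ a ∈ A, f ((m : ℤ) • a) ∈ B := by
  letI : Module (MonoidAlgebra R ↥H) Q :=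
    Module.compHom _ (MonoidAlgebra.mapDomainRingHom R H.subtype)
  letI : Module (MonoidAlgebra ℤ ↥H) P := Module.compHom _ (intCoeff R ↥H)
  letI : Module (MonoidAlgebra ℤ G) Q := Module.compHom _ (intCoeff R G)
  intro f A B hAfg hAspan _hBfg hBspan
  -- ℤG-smul on Q unfolds to the RG-smul of the image under `intCoeff`
  have hsmulZG : ∀ (z : MonoidAlgebra ℤ G) (q : Q), z • q = intCoeff R G z • q :=
    fun z q => rfl
  have hsmulZH : ∀ (z : MonoidAlgebra ℤ ↥H) (p : P), z • p = intCoeff R ↥H z • p :=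
    fun z p => rfl
  have hsmulRH : ∀ (r : MonoidAlgebra R ↥H) (q : Q),
      r • q = MonoidAlgebra.mapDomainRingHom R H.subtype r • q := fun r q => rfl
  -- zsmul membership in B
  have hzsmul : ∀ (k : ℤ) (q : Q), q ∈ B → k • q ∈ B := fun k q hq =>
    B.toAddSubgroup.zsmul_mem hq k
  -- Step A: every element of Q can be pushed into B by a suitable positive integer
  have claim : ∀ q : Q, ∃ n : ℕ, 0 < n ∧ IsUnit ((n : R)) ∧ (n : ℤ) • q ∈ B := by
    intro q
    have hq : q ∈ Submodule.span (MonoidAlgebra R G) (B : Set Q) := by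
      rw [hBspan]; exact Submodule.mem_top
    induction hq using Submodule.span_induction with
    | mem x hx => exact ⟨1, one_pos, by simp, by simpa using hx⟩
    | zero => exact ⟨1, one_pos, by simp, by simp⟩
    | add x y _ _ ihx ihy =>
      obtain ⟨n1, hn1, hu1, hx1⟩ := ihx
      obtain ⟨n2, hn2, hu2, hy2⟩ := ihy
      refine ⟨n1 * n2, Nat.mul_pos hn1 hn2, by push_cast; exact hu1.mul hu2, ?_⟩
      have : ((n1 * n2 : ℕ) : ℤ) • (x + y)
          = (n2 : ℤ) • ((n1 : ℤ) • x) + (n1 : ℤ) • ((n2 : ℤ) • y) := by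
        push_cast
        rw [smul_add, smul_smul, smul_smul, mul_comm (n2:ℤ) (n1:ℤ)]
      rw [this]
      exact B.add_mem (hzsmul _ _ hx1) (hzsmul _ _ hy2)
    | smul r x _ ihx =>
      obtain ⟨n, hn, hu, hxB⟩ := ihx
      obtain ⟨n1, hn1, hu1, z, hz⟩ := monoidAlgebra_clear_denom R r
      refine ⟨n1 * n, Nat.mul_pos hn1 hn, by push_cast; exact hu1.mul hu, ?_⟩
      have hmem : z • ((n : ℤ) • x) ∈ B := B.smul_mem z hxB
      have heq : z • ((n : ℤ) • x) = ((n1 * n : ℕ) : ℤ) • (r • x) :=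
        calc z • ((n : ℤ) • x) = (n1 • r) • ((n : ℤ) • x) := by rw [hsmulZG, hz]
        _ = n1 • (r • ((n : ℤ) • x)) := smul_assoc n1 r _
        _ = n1 • ((n : ℤ) • (r • x)) := by rw [smul_comm r ((n:ℤ)) x]
        _ = ((n1 : ℤ)) • ((n : ℤ) • (r • x)) := (natCast_zsmul _ n1).symm
        _ = ((n1 * n : ℕ) : ℤ) • (r • x) := by rw [smul_smul]; push_cast; ring_nf
      rwa [heq] at hmem
  -- Step B: a single integer working for all generators of A
  obtain ⟨s, hs⟩ := hAfg
  have stepB : ∀ t : Finset P, ∃ m : ℕ, 0 < m ∧ IsUnit ((m : R)) ∧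
      ∀ a ∈ t, (m : ℤ) • f a ∈ B := by
    classical
    intro t
    induction t using Finset.induction with
    | empty => exact ⟨1, one_pos, by simp, fun a ha => absurd ha (Finset.notMem_empty a)⟩
    | insert _ _ hnotmem ih =>
      rename_i a t
      obtain ⟨m2, hm2, hu2, hall⟩ := ih
      obtain ⟨m1, hm1, hu1, hmem⟩ := claim (f a)
      refine ⟨m1 * m2, Nat.mul_pos hm1 hm2, by push_cast; exact hu1.mul hu2, ?_⟩
      intro b hb
      rcases Finset.mem_insert.mp hb with rfl | hb
      · have : ((m1 * m2 : ℕ) : ℤ) • f b = (m2 : ℤ) • ((m1 : ℤ) • f b) := by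
          push_cast; rw [smul_smul, mul_comm]
        rw [this]; exact hzsmul _ _ hmem
      · have : ((m1 * m2 : ℕ) : ℤ) • f b = (m1 : ℤ) • ((m2 : ℤ) • f b) := by
          push_cast; rw [smul_smul]
        rw [this]; exact hzsmul _ _ (hall b hb)
  obtain ⟨m, hm, hu, hgen⟩ := stepB s
  refine ⟨m, hm, hu, ?_⟩
  intro a haA
  rw [map_zsmul]
  -- Step C: extend from generators to all of A by span induction
  rw [← hs] at haA
  induction haA using Submodule.span_induction with
  | mem x hx => exact hgen x hx
  | zero => simp
  | add x y _ _ ihx ihy => rw [map_add, smul_add]; exact B.add_mem ihx ihy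
  | smul z x _ ihx =>
    have key : f (z • x) = MonoidAlgebra.mapDomainRingHom ℤ H.subtype z • f x := by
      rw [hsmulZH, map_smul, hsmulRH,
        hsmulZG (MonoidAlgebra.mapDomainRingHom ℤ H.subtype z) (f x)]
      have := congrArg (fun φ => φ z • f x)
        (intCoeff_comm R H) |>.symm
      simpa using this
    rw [key, smul_comm]
    exact B.smul_mem _ ihx
end
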